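/- Let (D, ⟨·,·⟩) be a finite-dimensional real inner product space with a compatible complex structure J. If A : D → D is an invertible, skew-symmetric linear operator anti-commuting with J, then dim D ≡ 0 (mod 4). -/

import Mathlib

open scoped RealInnerProductSpace
open Module

theorem auxEven {D : Type*} [AddCommGroup D] [Module ℂ D] [FiniteDimensional ℂ D]
    (B : LinearMap.BilinForm ℂ D) (halt : B.IsAlt) (hnd : B.Nondegenerate) :
    Even (Module.finrank ℂ D) := by
  classical
  let b := Module.finBasis ℂ D
  let M := BilinForm.toMatrix b B
  have hdet : M.det ≠ 0 := (LinearMap.BilinForm.nondegenerate_iff_det_ne_zero b).mp hnd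
  have hT : M.transpose = -M := by
    ext i j
    simp only [Matrix.transpose_apply, Matrix.neg_apply, M, BilinForm.toMatrix_apply]
    exact (LinearMap.IsAlt.neg halt _ _).symm
  have h1 : M.det = (-1 : ℂ) ^ (finrank ℂ D) * M.det := by
    conv_lhs => rw [← Matrix.det_transpose, hT, Matrix.det_neg]
    simp
  rcases Nat.even_or_odd (finrank ℂ D) with h | h
  · exact h
  · exfalso
    rw [h.neg_one_pow, neg_one_mul] at h1
    apply hdet
    linear_combination h1 / 2

/-- complex module structure from a complex structure `J` (with `i` acting as `-J`). -/
noncomputable def cmodule {D : Type*} [AddCommGroup D] [Module ℝ D] (J : D →ₗ[ℝ] D)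
    (hJ2 : ∀ X, J (J X) = -X) : Module ℂ D where
  smul z x := z.re • x - z.im • J x
  one_smul x := by show (1:ℂ).re • x - (1:ℂ).im • J x = x; simp
  mul_smul z w x := by
    show (z*w).re • x - (z*w).im • J x
      = z.re • (w.re • x - w.im • J x) - z.im • J (w.re • x - w.im • J x)
    simp only [Complex.mul_re, Complex.mul_im, map_sub, map_smul, hJ2]
    module
  smul_zero z := by show z.re • (0:D) - z.im • J 0 = 0; simp
  smul_add z x y := by
    show z.re • (x + y) - z.im • J (x + y) = (z.re • x - z.im • J x) + (z.re • y - z.im • J y)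
    simp only [map_add, smul_add]; abel
  add_smul z w x := by
    show (z+w).re • x - (z+w).im • J x = (z.re • x - z.im • J x) + (w.re • x - w.im • J x)
    simp only [Complex.add_re, Complex.add_im, add_smul]; abel
  zero_smul x := by show (0:ℂ).re • x - (0:ℂ).im • J x = 0; simp

theorem stmt2 {D : Type*} [NormedAddCommGroup D] [InnerProductSpace ℝ D]
    [FiniteDimensional ℝ D] (J A : D →ₗ[ℝ] D)
    (hJ2 : ∀ X, J (J X) = -X)
    (hJg : ∀ X Y : D, ⟪J X, J Y⟫ = ⟪X, Y⟫)
    (hAbij : Function.Bijective A)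
    (hskew : ∀ X Y : D, ⟪A X, Y⟫ = -⟪X, A Y⟫)
    (hAJ : ∀ X, A (J X) = -J (A X)) :
    Module.finrank ℝ D % 4 = 0 := by
  -- J is skew
  have hJskew : ∀ X Y : D, ⟪J X, Y⟫ = -⟪X, J Y⟫ := by
    intro X Y
    have h := hJg X (J Y)
    rw [hJ2, inner_neg_right] at h
    linarith
  letI : Module ℂ D := cmodule J hJ2
  letI : IsScalarTower ℝ ℂ D := by
    constructor
    intro r z x
    show ((r • z).re) • x - ((r • z).im) • J x = r • (z.re • x - z.im • J x)
    simp [Complex.real_smul, smul_sub, smul_smul]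
  haveI : FiniteDimensional ℂ D := FiniteDimensional.right ℝ ℂ D
  -- the complex bilinear form
  set f : D → D → ℂ := fun x y => (⟪A x, y⟫ : ℂ) + (⟪A x, J y⟫ : ℂ) * Complex.I with hf
  have hsmul : ∀ (z : ℂ) (x : D), z • x = z.re • x - z.im • J x := fun z x => rfl
  have hl : ∀ (z : ℂ) (x y : D), f (z • x) y = z * f x y := by
    intro z x y
    rw [hsmul]
    simp only [hf, map_sub, map_smul, hAJ, LinearMap.smul_apply, LinearMap.neg_apply,
      inner_sub_left, inner_smul_left, inner_neg_left, hJskew (A x) y, hJskew (A x) (J y), hJ2,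
      inner_neg_right, starRingEnd_apply, star_trivial]
    conv_rhs => rw [← Complex.re_add_im z]
    push_cast
    linear_combination (-(⟪A x, J y⟫ : ℝ) * z.im : ℂ) * Complex.I_sq
  have hr : ∀ (z : ℂ) (x y : D), f x (z • y) = z * f x y := by
    intro z x y
    rw [hsmul]
    simp only [hf, map_sub, map_smul, inner_sub_right, inner_smul_right, hJ2, inner_neg_right]
    conv_rhs => rw [← Complex.re_add_im z]
    push_cast
    linear_combination (-(⟪A x, J y⟫ : ℝ) * z.im : ℂ) * Complex.I_sq
  have haddl : ∀ (x x' y : D), f (x + x') y = f x y + f x' y := by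
    intro x x' y
    simp only [hf, map_add, inner_add_left]
    push_cast
    ring
  have haddr : ∀ (x y y' : D), f x (y + y') = f x y + f x y' := by
    intro x y y'
    simp only [hf, map_add, inner_add_right]
    push_cast
    ring
  let B : LinearMap.BilinForm ℂ D := LinearMap.mk₂ ℂ f haddl hl haddr hr
  have halt : B.IsAlt := by
    intro x
    show f x x = 0
    have h1 : ⟪A x, x⟫ = 0 := by
      have h := hskew x x
      have h' := real_inner_comm (A x) x
      linarith
    have h2 : ⟪A x, J x⟫ = 0 := by
      have h3 := hskew x (J x)
      rw [hAJ, inner_neg_right] at h3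
      have h4 := real_inner_comm x (J (A x))
      have h5 := hJskew (A x) x
      linarith
    simp [hf, h1, h2]
  have hnd : B.Nondegenerate := by
    refine (LinearMap.IsRefl.nondegenerate_iff_separatingLeft (LinearMap.IsAlt.isRefl halt)).mpr ?_
    intro x hx
    have h1 : ∀ y, ⟪A x, y⟫ = 0 := by
      intro y
      have := hx y
      have : f x y = 0 := this
      have := congrArg Complex.re this
      simpa [hf] using this
    have hAx : A x = 0 := by
      have := h1 (A x)
      rwa [real_inner_self_eq_norm_sq, pow_eq_zero_iff, norm_eq_zero] at this
      norm_num
    exact hAbij.injective (by simp [hAx])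
  obtain ⟨k, hk⟩ := auxEven B halt hnd
  have htower : finrank ℝ ℂ * finrank ℂ D = finrank ℝ D := Module.finrank_mul_finrank ℝ ℂ D
  rw [Complex.finrank_real_complex, hk] at htower
  omega
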